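/- arXiv:2308.13350 — 4 statements merged into one kernel-verified Lean document; each statement's English description precedes it below -/
import Mathlib

section
/- Let f:ℝ^m→ℝ^p and g:ℝ^n→ℝ^p be C^1 maps with isolated critical value 0 (i.e. Sing f ⊆ f⁻¹(0) and Sing g ⊆ g⁻¹(0)), and let G(x,y)=f(x)+g(y). Then Sing G ⊆ Sing f × Sing g, and Sing f × Sing g ⊆ G⁻¹(0); consequently G has isolated critical value 0 (Sing G ⊆ G⁻¹(0)). -/
noncomputable section

/-- The singular set of a map into `ℝ^p`: points where the derivative is not surjective
(rank `< p`). -/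
def SingSet {X : Type*} [NormedAddCommGroup X] [NormedSpace ℝ X]
    {p : ℕ} (Φ : X → EuclideanSpace ℝ (Fin p)) : Set X :=
  {x | ¬ Function.Surjective (fderiv ℝ Φ x)}

/-- If `f : ℝ^m → ℝ^p` and `g : ℝ^n → ℝ^p` are `C¹` maps with isolated critical value `0`
and `G(x,y) = f(x) + g(y)`, then `Sing G ⊆ Sing f × Sing g ⊆ G⁻¹(0)`; consequently `G` has
isolated critical value `0`. -/
theorem sing_sum_separable {m n p : ℕ}
    (f : EuclideanSpace ℝ (Fin m) → EuclideanSpace ℝ (Fin p))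
    (g : EuclideanSpace ℝ (Fin n) → EuclideanSpace ℝ (Fin p))
    (hf : ContDiff ℝ 1 f) (hg : ContDiff ℝ 1 g)
    (hfv : SingSet f ⊆ f ⁻¹' {0}) (hgv : SingSet g ⊆ g ⁻¹' {0}) :
    SingSet (fun z : EuclideanSpace ℝ (Fin m) × EuclideanSpace ℝ (Fin n) => f z.1 + g z.2)
        ⊆ SingSet f ×ˢ SingSet g ∧
    SingSet f ×ˢ SingSet g ⊆
      (fun z : EuclideanSpace ℝ (Fin m) × EuclideanSpace ℝ (Fin n) => f z.1 + g z.2) ⁻¹' {0} ∧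
    SingSet (fun z : EuclideanSpace ℝ (Fin m) × EuclideanSpace ℝ (Fin n) => f z.1 + g z.2)
        ⊆ (fun z : EuclideanSpace ℝ (Fin m) × EuclideanSpace ℝ (Fin n) => f z.1 + g z.2) ⁻¹' {0} := by
  set G : EuclideanSpace ℝ (Fin m) × EuclideanSpace ℝ (Fin n) → EuclideanSpace ℝ (Fin p) :=
    fun z => f z.1 + g z.2 with hG
  have hdf : ∀ x, HasFDerivAt f (fderiv ℝ f x) x :=
    fun x => (hf.differentiable one_ne_zero x).hasFDerivAt
  have hdg : ∀ y, HasFDerivAt g (fderiv ℝ g y) y :=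
    fun y => (hg.differentiable one_ne_zero y).hasFDerivAt
  have hDG : ∀ z : EuclideanSpace ℝ (Fin m) × EuclideanSpace ℝ (Fin n),
      fderiv ℝ G z = (fderiv ℝ f z.1).comp (ContinuousLinearMap.fst ℝ _ _)
        + (fderiv ℝ g z.2).comp (ContinuousLinearMap.snd ℝ _ _) := by
    intro z
    have : HasFDerivAt G ((fderiv ℝ f z.1).comp (ContinuousLinearMap.fst ℝ _ _)
        + (fderiv ℝ g z.2).comp (ContinuousLinearMap.snd ℝ _ _)) z :=
      ((hdf z.1).comp z (hasFDerivAt_fst)).add ((hdg z.2).comp z (hasFDerivAt_snd))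
    exact this.fderiv
  have h1 : SingSet G ⊆ SingSet f ×ˢ SingSet g := by
    intro z hz
    constructor
    · -- if fderiv f z.1 surjective then fderiv G z surjective
      by_contra hs
      simp only [SingSet, Set.mem_setOf_eq, not_not] at hs
      apply hz
      intro w
      obtain ⟨u, hu⟩ := hs w
      refine ⟨(u, 0), ?_⟩
      rw [hDG z]
      simp [hu]
    · by_contra hs
      simp only [SingSet, Set.mem_setOf_eq, not_not] at hs
      apply hz
      intro w
      obtain ⟨u, hu⟩ := hs w
      refine ⟨(0, u), ?_⟩
      rw [hDG z]
      simp [hu]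
  have h2 : SingSet f ×ˢ SingSet g ⊆ G ⁻¹' {0} := by
    rintro ⟨x, y⟩ ⟨hx, hy⟩
    have hfx : f x = 0 := hfv hx
    have hgy : g y = 0 := hgv hy
    simp [hG, hfx, hgy]
  exact ⟨h1, h2, fun z hz => h2 (h1 hz)⟩
end
end

section
/- Let f:(ℂ^m,0)→(ℂ,0) be a real-differentiable (mixed) function, viewed as a map ℝ^{2m}→ℝ². Then f is horizontally weakly conformal (the gradients of Re f and Im f are orthogonal and of equal length at every point) if and only if ⟨ conj(df(z)), d̄f(z) ⟩_ℂ = 0 at every point z, where df=(∂f/∂z₁,…,∂f/∂z_m) and d̄f=(∂f/∂z̄₁,…,∂f/∂z̄_m) are the holomorphic and anti-holomorphic gradients and ⟨·,·⟩_ℂ is the Hermitian product. -/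
open scoped RealInnerProductSpace

noncomputable section

/-- The model for `ℂ^m ≅ ℝ^{2m}`: a point `w` represents `z = w.1 + i w.2`. -/
abbrev CSpace (m : ℕ) := WithLp 2 (EuclideanSpace ℝ (Fin m) × EuclideanSpace ℝ (Fin m))

/-- The holomorphic (Wirtinger) gradient `∂f/∂z_j = (∂f/∂x_j - i ∂f/∂y_j)/2`. -/
def wdz {m : ℕ} (f : CSpace m → ℂ) (w : CSpace m) (j : Fin m) : ℂ :=
  (1 / 2 : ℂ) *
    (fderiv ℝ f w ((WithLp.equiv 2 _).symm (EuclideanSpace.single j 1, 0)) -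
      Complex.I * fderiv ℝ f w ((WithLp.equiv 2 _).symm (0, EuclideanSpace.single j 1)))

/-- The anti-holomorphic (Wirtinger) gradient `∂f/∂z̄_j = (∂f/∂x_j + i ∂f/∂y_j)/2`. -/
def wdzbar {m : ℕ} (f : CSpace m → ℂ) (w : CSpace m) (j : Fin m) : ℂ :=
  (1 / 2 : ℂ) *
    (fderiv ℝ f w ((WithLp.equiv 2 _).symm (EuclideanSpace.single j 1, 0)) +
      Complex.I * fderiv ℝ f w ((WithLp.equiv 2 _).symm (0, EuclideanSpace.single j 1)))

/-- `f` is horizontally weakly conformal at every point: the real gradients of `Re f` and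
`Im f` are orthogonal and have equal norms. -/
def IsHWC {m : ℕ} (f : CSpace m → ℂ) : Prop :=
  ∀ w : CSpace m,
    ⟪gradient (fun w => (f w).re) w, gradient (fun w => (f w).im) w⟫ = 0 ∧
    ‖gradient (fun w => (f w).re) w‖ = ‖gradient (fun w => (f w).im) w‖

section Aux

variable {m : ℕ} (f : CSpace m → ℂ)

private def ex (j : Fin m) : CSpace m :=
  (WithLp.equiv 2 _).symm (EuclideanSpace.single j 1, 0)

private def ey (j : Fin m) : CSpace m :=
  (WithLp.equiv 2 _).symm (0, EuclideanSpace.single j 1)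

private lemma gradient_comp_clm (g : ℂ →L[ℝ] ℝ) (hf : Differentiable ℝ f) (w : CSpace m) :
    gradient (fun w => g (f w)) w =
      (InnerProductSpace.toDual ℝ (CSpace m)).symm (g.comp (fderiv ℝ f w)) := by
  unfold gradient
  congr 1
  exact (fderiv_comp w g.differentiableAt (hf w)).trans (by rw [ContinuousLinearMap.fderiv])

private lemma inner_gradient_comp_clm (g : ℂ →L[ℝ] ℝ) (hf : Differentiable ℝ f)
    (w v : CSpace m) :
    ⟪gradient (fun w => g (f w)) w, v⟫ = g (fderiv ℝ f w v) := by
  rw [gradient_comp_clm f g hf w, InnerProductSpace.toDual_symm_apply]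
  rfl

private lemma grad_fst (g : ℂ →L[ℝ] ℝ) (hf : Differentiable ℝ f) (w : CSpace m) (j : Fin m) :
    (gradient (fun w => g (f w)) w).ofLp.1 j = g (fderiv ℝ f w (ex j)) := by
  rw [← inner_gradient_comp_clm f g hf w (ex j)]
  rw [WithLp.prod_inner_apply]
  simp [ex, EuclideanSpace.inner_single_right]

private lemma grad_snd (g : ℂ →L[ℝ] ℝ) (hf : Differentiable ℝ f) (w : CSpace m) (j : Fin m) :
    (gradient (fun w => g (f w)) w).ofLp.2 j = g (fderiv ℝ f w (ey j)) := by
  rw [← inner_gradient_comp_clm f g hf w (ey j)]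
  rw [WithLp.prod_inner_apply]
  simp [ey, EuclideanSpace.inner_single_right]

end Aux

private lemma key {m : ℕ} (f : CSpace m → ℂ) (hf : Differentiable ℝ f) (w : CSpace m) :
    (⟪gradient (fun w => (f w).re) w, gradient (fun w => (f w).im) w⟫ = 0 ∧
      ‖gradient (fun w => (f w).re) w‖ = ‖gradient (fun w => (f w).im) w‖) ↔
    ∑ j : Fin m, wdz f w j * wdzbar f w j = 0 := by
  set G := gradient (fun w => (f w).re) w with hG
  set H := gradient (fun w => (f w).im) w with hH
  set a : Fin m → ℝ := fun j => (fderiv ℝ f w (ex j)).re with ha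
  set b : Fin m → ℝ := fun j => (fderiv ℝ f w (ey j)).re with hb
  set c : Fin m → ℝ := fun j => (fderiv ℝ f w (ex j)).im with hc
  set d : Fin m → ℝ := fun j => (fderiv ℝ f w (ey j)).im with hd
  have hG1 : ∀ j, G.ofLp.1 j = a j := fun j => grad_fst f Complex.reCLM hf w j
  have hG2 : ∀ j, G.ofLp.2 j = b j := fun j => grad_snd f Complex.reCLM hf w j
  have hH1 : ∀ j, H.ofLp.1 j = c j := fun j => grad_fst f Complex.imCLM hf w j
  have hH2 : ∀ j, H.ofLp.2 j = d j := fun j => grad_snd f Complex.imCLM hf w j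
  -- inner products in coordinates
  have hinner : ∀ (X Y : CSpace m), ⟪X, Y⟫ = ∑ j, X.ofLp.1 j * Y.ofLp.1 j + ∑ j, X.ofLp.2 j * Y.ofLp.2 j := by
    intro X Y
    simp [WithLp.prod_inner_apply, PiLp.inner_apply, RCLike.inner_apply, mul_comm]
  have hGH : ⟪G, H⟫ = ∑ j, (a j * c j + b j * d j) := by
    rw [hinner, Finset.sum_add_distrib]
    simp only [hG1, hG2, hH1, hH2]
  have hGG : ‖G‖ ^ 2 = ∑ j, (a j ^ 2 + b j ^ 2) := by
    rw [← real_inner_self_eq_norm_sq, hinner, Finset.sum_add_distrib]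
    simp only [hG1, hG2]
    ring_nf
  have hHH : ‖H‖ ^ 2 = ∑ j, (c j ^ 2 + d j ^ 2) := by
    rw [← real_inner_self_eq_norm_sq, hinner, Finset.sum_add_distrib]
    simp only [hH1, hH2]
    ring_nf
  -- the Wirtinger sum in coordinates
  have hterm : ∀ j : Fin m, wdz f w j * wdzbar f w j =
      ((1 / 4 : ℝ) : ℂ) * ((fderiv ℝ f w (ex j)) ^ 2 + (fderiv ℝ f w (ey j)) ^ 2) := by
    intro j
    simp only [wdz, wdzbar, ex, ey]
    push_cast
    linear_combination (-(1 / 4 : ℂ) *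
      (fderiv ℝ f w ((WithLp.equiv 2 _).symm (0, EuclideanSpace.single j 1))) ^ 2) *
      Complex.I_sq
  have hre : (∑ j : Fin m, wdz f w j * wdzbar f w j).re =
      (∑ j, (a j ^ 2 + b j ^ 2) - ∑ j, (c j ^ 2 + d j ^ 2)) / 4 := by
    rw [Complex.re_sum, ← Finset.sum_sub_distrib, Finset.sum_div]
    refine Finset.sum_congr rfl fun j _ => ?_
    simp only [hterm, ha, hb, hc, hd, Complex.re_ofReal_mul, Complex.ofReal_re, Complex.ofReal_im, Complex.add_re, sq,
      Complex.mul_re]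
    ring
  have him : (∑ j : Fin m, wdz f w j * wdzbar f w j).im =
      (∑ j, (a j * c j + b j * d j)) / 2 := by
    rw [Complex.im_sum, Finset.sum_div]
    refine Finset.sum_congr rfl fun j _ => ?_
    simp only [hterm, ha, hb, hc, hd, Complex.im_ofReal_mul, Complex.ofReal_re, Complex.ofReal_im, Complex.add_im, sq,
      Complex.mul_im]
    ring
  rw [Complex.ext_iff, hre, him, Complex.zero_re, Complex.zero_im]
  constructor
  · rintro ⟨h1, h2⟩
    have h3 : ‖G‖ ^ 2 = ‖H‖ ^ 2 := by rw [h2]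
    rw [hGG, hHH] at h3
    rw [hGH] at h1
    constructor <;> [skip; skip] <;> rw [div_eq_zero_iff] <;> left <;> linarith
  · rintro ⟨h1, h2⟩
    have h1' : ∑ j, (a j ^ 2 + b j ^ 2) = ∑ j, (c j ^ 2 + d j ^ 2) := by
      rw [div_eq_zero_iff] at h1
      rcases h1 with h1 | h1 <;> [linarith; norm_num at h1]
    have h2' : ∑ j, (a j * c j + b j * d j) = 0 := by
      rw [div_eq_zero_iff] at h2
      rcases h2 with h2 | h2 <;> [exact h2; norm_num at h2]
    refine ⟨by rw [hGH]; exact h2', ?_⟩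
    rw [← sq_eq_sq₀ (norm_nonneg G) (norm_nonneg H), hGG, hHH]
    exact h1'

/-- A real-differentiable mixed function `f : ℂ^m → ℂ` is horizontally weakly conformal
iff the Hermitian product `⟨conj(df), d̄f⟩_ℂ = ∑_j (∂f/∂z_j)(∂f/∂z̄_j)` vanishes at every
point. -/
theorem hwc_iff_wirtinger {m : ℕ} (f : CSpace m → ℂ) (hf : Differentiable ℝ f) :
    IsHWC f ↔ ∀ w : CSpace m, ∑ j : Fin m, wdz f w j * wdzbar f w j = 0 := by
  unfold IsHWC
  exact forall_congr' fun w => key f hf w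
end
end

section
/- Let G₁,G₂,G₃,G₄:ℝ^{2n}→ℝ be C^1 functions such that (G₁,G₂) and (G₃,G₄) are horizontally weakly conformal maps into ℝ², and suppose ⟨∇G₁,∇G₃⟩−⟨∇G₂,∇G₄⟩=0 and ⟨∇G₁,∇G₄ ⟩+⟨∇G₂,∇G₃⟩=0 at every point. Then the map (G₁G₃−G₂G₄, G₁G₄+G₂G₃):ℝ^{2n}→ℝ² is horizontally weakly conformal. -/
open scoped RealInnerProductSpace

noncomputable section

/-- A pair `(H₁, H₂)` of real functions is horizontally weakly conformal if at every point
`⟨∇H₁, ∇H₂⟩ = 0` and `‖∇H₁‖² = ‖∇H₂‖²`. -/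
def IsHWCPair {E : Type*} [NormedAddCommGroup E] [InnerProductSpace ℝ E] [CompleteSpace E]
    (H₁ H₂ : E → ℝ) : Prop :=
  ∀ x : E, ⟪gradient H₁ x, gradient H₂ x⟫ = 0 ∧
    ‖gradient H₁ x‖ ^ 2 = ‖gradient H₂ x‖ ^ 2

lemma hga_mul {E : Type*} [NormedAddCommGroup E] [InnerProductSpace ℝ E]
    [CompleteSpace E] {f g : E → ℝ} {f' g' : E} {x : E}
    (hf : HasGradientAt f f' x) (hg : HasGradientAt g g' x) :
    HasGradientAt (fun y => f y * g y) (g x • f' + f x • g') x := by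
  rw [hasGradientAt_iff_hasFDerivAt] at hf hg ⊢
  simpa [map_add, map_smul, add_comm, Pi.mul_def] using hf.mul hg

lemma hga_add {E : Type*} [NormedAddCommGroup E] [InnerProductSpace ℝ E]
    [CompleteSpace E] {f g : E → ℝ} {f' g' : E} {x : E}
    (hf : HasGradientAt f f' x) (hg : HasGradientAt g g' x) :
    HasGradientAt (fun y => f y + g y) (f' + g') x := by
  rw [hasGradientAt_iff_hasFDerivAt] at hf hg ⊢
  simpa [map_add, Pi.add_def] using hf.add hg

lemma hga_sub {E : Type*} [NormedAddCommGroup E] [InnerProductSpace ℝ E]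
    [CompleteSpace E] {f g : E → ℝ} {f' g' : E} {x : E}
    (hf : HasGradientAt f f' x) (hg : HasGradientAt g g' x) :
    HasGradientAt (fun y => f y - g y) (f' - g') x := by
  rw [hasGradientAt_iff_hasFDerivAt] at hf hg ⊢
  simpa [map_sub, Pi.sub_def] using hf.sub hg

/-- If `(G₁,G₂)` and `(G₃,G₄)` are horizontally weakly conformal on `ℝ^{2n}` and the
cross-compatibility conditions `⟨∇G₁,∇G₃⟩ − ⟨∇G₂,∇G₄⟩ = 0` and
`⟨∇G₁,∇G₄⟩ + ⟨∇G₂,∇G₃⟩ = 0` hold everywhere, then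
`(G₁G₃ − G₂G₄, G₁G₄ + G₂G₃)` is horizontally weakly conformal. -/
theorem hwc_complex_product {n : ℕ}
    (G₁ G₂ G₃ G₄ : EuclideanSpace ℝ (Fin (2 * n)) → ℝ)
    (h₁ : ContDiff ℝ 1 G₁) (h₂ : ContDiff ℝ 1 G₂) (h₃ : ContDiff ℝ 1 G₃)
    (h₄ : ContDiff ℝ 1 G₄)
    (hwc12 : IsHWCPair G₁ G₂) (hwc34 : IsHWCPair G₃ G₄)
    (hcross1 : ∀ x, ⟪gradient G₁ x, gradient G₃ x⟫ - ⟪gradient G₂ x, gradient G₄ x⟫ = 0)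
    (hcross2 : ∀ x, ⟪gradient G₁ x, gradient G₄ x⟫ + ⟪gradient G₂ x, gradient G₃ x⟫ = 0) :
    IsHWCPair (fun x => G₁ x * G₃ x - G₂ x * G₄ x) (fun x => G₁ x * G₄ x + G₂ x * G₃ x) := by
  intro x
  have d₁ := (h₁.differentiable one_ne_zero x).hasGradientAt
  have d₂ := (h₂.differentiable one_ne_zero x).hasGradientAt
  have d₃ := (h₃.differentiable one_ne_zero x).hasGradientAt
  have d₄ := (h₄.differentiable one_ne_zero x).hasGradientAt
  set a := gradient G₁ x with ha
  set b := gradient G₂ x with hb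
  set c := gradient G₃ x with hc
  set d := gradient G₄ x with hd
  have hu : gradient (fun x => G₁ x * G₃ x - G₂ x * G₄ x) x
      = (G₃ x • a + G₁ x • c) - (G₄ x • b + G₂ x • d) :=
    HasGradientAt.gradient (hga_sub (hga_mul d₁ d₃) (hga_mul d₂ d₄))
  have hv : gradient (fun x => G₁ x * G₄ x + G₂ x * G₃ x) x
      = (G₄ x • a + G₁ x • d) + (G₃ x • b + G₂ x • c) :=
    HasGradientAt.gradient (hga_add (hga_mul d₁ d₄) (hga_mul d₂ d₃))
  obtain ⟨e1, e2⟩ := hwc12 x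
  obtain ⟨e3, e4⟩ := hwc34 x
  have e5 := hcross1 x
  have e6 := hcross2 x
  rw [← real_inner_self_eq_norm_sq, ← real_inner_self_eq_norm_sq] at e2 e4
  have e2' : (⟪a, a⟫ : ℝ) = ⟪b, b⟫ := e2
  have e4' : (⟪c, c⟫ : ℝ) = ⟪d, d⟫ := e4
  rw [← real_inner_self_eq_norm_sq, ← real_inner_self_eq_norm_sq, hu, hv]
  have e1' : (⟪b, a⟫ : ℝ) = 0 := by rw [real_inner_comm a b]; exact e1
  have e3' : (⟪d, c⟫ : ℝ) = 0 := by rw [real_inner_comm c d]; exact e3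
  have e5' : (⟪c, a⟫ : ℝ) - ⟪d, b⟫ = 0 := by
    rw [real_inner_comm a c, real_inner_comm b d]; exact e5
  have e6' : (⟪d, a⟫ : ℝ) + ⟪c, b⟫ = 0 := by
    rw [real_inner_comm a d, real_inner_comm b c]; exact e6
  constructor
  · simp only [inner_add_left, inner_add_right, inner_sub_left, inner_sub_right,
      real_inner_smul_left, real_inner_smul_right]
    rw [real_inner_comm b a, real_inner_comm c a, real_inner_comm d a,
      real_inner_comm c b, real_inner_comm d b, real_inner_comm d c]
    linear_combination (G₃ x * G₄ x) * e2' + (G₁ x * G₂ x) * e4'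
      + (G₃ x ^ 2 - G₄ x ^ 2) * e1' + (G₁ x ^ 2 - G₂ x ^ 2) * e3'
      + (G₂ x * G₃ x + G₁ x * G₄ x) * e5' + (G₁ x * G₃ x - G₂ x * G₄ x) * e6'
  · simp only [inner_add_left, inner_add_right, inner_sub_left, inner_sub_right,
      real_inner_smul_left, real_inner_smul_right]
    rw [real_inner_comm b a, real_inner_comm c a, real_inner_comm d a,
      real_inner_comm c b, real_inner_comm d b, real_inner_comm d c]
    linear_combination (G₃ x ^ 2 - G₄ x ^ 2) * e2' + (G₁ x ^ 2 - G₂ x ^ 2) * e4'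
      - 4 * (G₃ x * G₄ x) * e1' - 4 * (G₁ x * G₂ x) * e3'
      + (2 * G₁ x * G₃ x - 2 * G₂ x * G₄ x) * e5'
      - (2 * G₂ x * G₃ x + 2 * G₁ x * G₄ x) * e6'
end
end

section
/- The map G:ℝ³→ℝ² given by G(x,y,z)=(xy,xz) satisfies the Milnor condition (b) at the origin: the closure of M(G)∖V_G intersected with V_G is contained in {0}, where V_G={x=0}∪{y=z=0} and M(G)={x=0}∪{x²−y²−z²=0}. -/
noncomputable section

/-- The zero set `V_G` of `G(x,y,z) = (xy, xz)`, i.e. `{x = 0} ∪ {y = z = 0}`. -/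
def VG : Set (EuclideanSpace ℝ (Fin 3)) :=
  {p | p 0 * p 1 = 0 ∧ p 0 * p 2 = 0}

/-- The Milnor set `M(G)` of `G(x,y,z) = (xy, xz)`: `{x = 0} ∪ {x² − y² − z² = 0}`. -/
def MG : Set (EuclideanSpace ℝ (Fin 3)) :=
  {p | p 0 = 0 ∨ (p 0) ^ 2 - (p 1) ^ 2 - (p 2) ^ 2 = 0}

/-- `G(x,y,z) = (xy, xz)` satisfies the Milnor condition (b) at the origin:
`closure (M(G) ∖ V_G) ∩ V_G ⊆ {0}`. -/
theorem milnor_condition_b_xy_xz :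
    closure (MG \ VG) ∩ VG ⊆ {(0 : EuclideanSpace ℝ (Fin 3))} := by
  intro p hp
  obtain ⟨hc, h1, h2⟩ := hp
  -- the cone condition holds on the closure
  have hsub : MG \ VG ⊆ {q : EuclideanSpace ℝ (Fin 3) |
      (q 0) ^ 2 - (q 1) ^ 2 - (q 2) ^ 2 = 0} := by
    rintro q ⟨hM, hVq⟩
    rcases hM with h0 | h
    · exact absurd ⟨by rw [h0]; ring, by rw [h0]; ring⟩ hVq
    · exact h
  have hclosed : IsClosed {q : EuclideanSpace ℝ (Fin 3) |
      (q 0) ^ 2 - (q 1) ^ 2 - (q 2) ^ 2 = 0} := by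
    apply isClosed_eq _ continuous_const
    have h0 := (EuclideanSpace.proj (0 : Fin 3) : EuclideanSpace ℝ (Fin 3) →L[ℝ] ℝ).continuous
    have h1 := (EuclideanSpace.proj (1 : Fin 3) : EuclideanSpace ℝ (Fin 3) →L[ℝ] ℝ).continuous
    have h2 := (EuclideanSpace.proj (2 : Fin 3) : EuclideanSpace ℝ (Fin 3) →L[ℝ] ℝ).continuous
    exact ((h0.pow 2).sub (h1.pow 2)).sub (h2.pow 2)
  have hcone : (p 0) ^ 2 - (p 1) ^ 2 - (p 2) ^ 2 = 0 :=
    hclosed.closure_subset ((closure_mono hsub) hc)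
  have h4 : p 0 ^ 4 = 0 := by
    linear_combination (p 0 ^ 2) * hcone + (p 0 * p 1) * h1 + (p 0 * p 2) * h2
  have hx : p 0 = 0 := by
    have := pow_eq_zero_iff (n := 4) (by norm_num) |>.mp h4
    exact this
  have hy : p 1 = 0 := by nlinarith [sq_nonneg (p 1), sq_nonneg (p 2)]
  have hz : p 2 = 0 := by nlinarith [sq_nonneg (p 1), sq_nonneg (p 2)]
  have : p = 0 := by
    ext i
    fin_cases i <;> simpa [hx, hy, hz]
  exact this
end
end
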